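/- For fixed y > 0, z > 0, α > 0 and any 0 < A ≤ B, the maximum of g(x) = (y * z^x / x^α)^x over x ∈ [A, B] is at most the maximum of exp((α/2) * y^(1/α)), g(A), and g(B). -/

import Mathlib

open Real

private lemma key_max (y z0 α : ℝ) (hy : 0 < y) (hα : 0 < α) (t : ℝ) (ht : 0 < t)
    (heq : Real.log y + 2 * t * Real.log z0 - α * (Real.log t + 1) = 0) :
    t * Real.log y + t * t * Real.log z0 - α * (t * Real.log t)
      ≤ α / 2 * y ^ (1 / α) := by
  set c : ℝ := y ^ (1 / α) with hc
  have hcpos : 0 < c := Real.rpow_pos_of_pos hy _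
  have hlogc : α * Real.log c = Real.log y := by
    rw [hc, Real.log_rpow hy]
    field_simp
  -- reduce to t*(1 + log c - log t) ≤ c
  have h1 : Real.log (c / t) ≤ c / t - 1 :=
    Real.log_le_sub_one_of_pos (div_pos hcpos ht)
  rw [Real.log_div hcpos.ne' ht.ne'] at h1
  have h2 : t * (Real.log c - Real.log t) ≤ c - t :=
    calc t * (Real.log c - Real.log t) ≤ t * (c / t - 1) :=
          mul_le_mul_of_nonneg_left h1 ht.le
      _ = c - t := by field_simp
  nlinarith [heq, mul_le_mul_of_nonneg_left h2 (by positivity : (0:ℝ) ≤ α / 2),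
    hlogc, ht, hα]

theorem stmt_6 (y z α A B : ℝ) (hy : 0 < y) (hz : 0 < z) (hα : 0 < α)
    (hA : 0 < A) (hAB : A ≤ B) :
    ∀ x ∈ Set.Icc A B,
      (y * z ^ x / x ^ α) ^ x
        ≤ max (Real.exp ((α / 2) * y ^ (1 / α)))
            (max ((y * z ^ A / A ^ α) ^ A) ((y * z ^ B / B ^ α) ^ B)) := by
  set F : ℝ → ℝ := fun x => x * Real.log y + x * x * Real.log z - α * (x * Real.log x)
    with hF
  -- g x = exp (F x) for x > 0
  have hg : ∀ x : ℝ, 0 < x → (y * z ^ x / x ^ α) ^ x = Real.exp (F x) := by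
    intro x hx
    have hbase : 0 < y * z ^ x / x ^ α := by positivity
    rw [Real.rpow_def_of_pos hbase, Real.log_div (by positivity) (by positivity),
      Real.log_mul hy.ne' (by positivity), Real.log_rpow hz, Real.log_rpow hx]
    simp only [hF]
    ring_nf
  -- derivative of F
  have hderiv : ∀ x : ℝ, 0 < x →
      HasDerivAt F (Real.log y + 2 * x * Real.log z - α * (Real.log x + 1)) x := by
    intro x hx
    have h1 : HasDerivAt (fun x : ℝ => x * Real.log y) (Real.log y) x := by
      simpa using (hasDerivAt_id x).mul_const (Real.log y)
    have h2 : HasDerivAt (fun x : ℝ => x * x * Real.log z) (2 * x * Real.log z) x := by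
      have := ((hasDerivAt_id x).mul (hasDerivAt_id x)).mul_const (Real.log z)
      simpa [two_mul] using this
    have h3 : HasDerivAt (fun x : ℝ => α * (x * Real.log x))
        (α * (Real.log x + 1)) x := by
      have := ((hasDerivAt_id x).mul (Real.hasDerivAt_log hx.ne')).const_mul α
      simpa [mul_comm, add_comm, mul_inv_cancel₀ hx.ne'] using this
    exact (h1.add h2).sub h3
  have hdiff : DifferentiableOn ℝ F (Set.Icc A B) := fun x hx =>
    ((hderiv x (lt_of_lt_of_le hA hx.1)).differentiableAt).differentiableWithinAt
  have hcont : ContinuousOn F (Set.Icc A B) := hdiff.continuousOn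
  obtain ⟨x₀, hx₀mem, hx₀max⟩ :=
    isCompact_Icc.exists_isMaxOn ⟨A, Set.left_mem_Icc.mpr hAB⟩ hcont
  have hx₀pos : 0 < x₀ := lt_of_lt_of_le hA hx₀mem.1
  intro x hx
  have hxpos : 0 < x := lt_of_lt_of_le hA hx.1
  rw [hg x hxpos, hg A hA, hg B (lt_of_lt_of_le hA hAB)]
  -- suffices F x ≤ max of logs
  have key : F x ≤ max (α / 2 * y ^ (1 / α)) (max (F A) (F B)) := by
    have hle : F x ≤ F x₀ := hx₀max hx
    rcases eq_or_lt_of_le hx₀mem.1 with hAe | hAlt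
    · exact le_max_of_le_right (le_max_of_le_left (hAe ▸ hle))
    rcases eq_or_lt_of_le hx₀mem.2 with hBe | hBlt
    · exact le_max_of_le_right (le_max_of_le_right (hBe ▸ hle))
    -- interior max
    have hloc : IsLocalMax F x₀ :=
      hx₀max.isLocalMax (Icc_mem_nhds hAlt hBlt)
    have hzero := hloc.hasDerivAt_eq_zero (hderiv x₀ hx₀pos)
    have := key_max y z α hy hα x₀ hx₀pos hzero
    exact le_max_of_le_left (hle.trans this)
  rcases le_max_iff.mp key with h | h
  · exact le_max_of_le_left (Real.exp_le_exp.mpr h)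
  rcases le_max_iff.mp h with h | h
  · exact le_max_of_le_right (le_max_of_le_left (Real.exp_le_exp.mpr h))
  · exact le_max_of_le_right (le_max_of_le_right (Real.exp_le_exp.mpr h))
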